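/- Define p_∞ : ℝ² → ℝ² by p_∞(x) := x / (2π(1+|x|²)) and the weight ρ : ℝ² → ℝ by ρ(x) := 1 / ( (1 + (1/2)·log(1+|x|²)) · √(1+|x|²) ). Then for each ℓ ∈ {1,2}: (i) the function x ↦ ρ(x)·(p_∞(x)·e_ℓ) belongs to L²(ℝ²); and (ii) the gradient x ↦ ∇(p_∞·e_ℓ)(x) belongs to L²(ℝ²; ℝ²). That is, the components of p_∞ belong to the weighted Sobolev space W(ℝ²) := { u : ℝ² → ℝ : ρu ∈ L²(ℝ²), ∇u ∈ L²(ℝ²) }. -/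

import Mathlib

open Real MeasureTheory

/-- The first-order term at infinity `p_∞(x) = x / (2π (1 + |x|²))`. -/
noncomputable def pInf (x : EuclideanSpace ℝ (Fin 2)) : EuclideanSpace ℝ (Fin 2) :=
  (1 / (2 * π * (1 + ‖x‖ ^ 2))) • x

/-- The weight `ρ(x) = 1 / ((1 + (1/2) log(1 + |x|²)) √(1 + |x|²))`. -/
noncomputable def wght (x : EuclideanSpace ℝ (Fin 2)) : ℝ :=
  1 / ((1 + (1 / 2 : ℝ) * Real.log (1 + ‖x‖ ^ 2)) * Real.sqrt (1 + ‖x‖ ^ 2))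

section aux

local notation "E2" => EuclideanSpace ℝ (Fin 2)

lemma aux_q_pos (x : E2) : (0:ℝ) < 1 + ‖x‖ ^ 2 := by positivity

lemma aux_coord_abs_le (x : E2) (i : Fin 2) : |x i| ≤ ‖x‖ := by
  have h1 : (x i) ^ 2 ≤ ∑ j, (x j) ^ 2 := by
    exact Finset.single_le_sum (f := fun j => (x j) ^ 2) (fun j _ => sq_nonneg _)
      (Finset.mem_univ i)
  have h2 : ‖x‖ ^ 2 = ∑ j, (x j) ^ 2 := by
    rw [EuclideanSpace.norm_eq]
    rw [Real.sq_sqrt (by positivity)]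
    simp [Real.norm_eq_abs, sq_abs]
  have := h1.trans_eq h2.symm
  calc |x i| = Real.sqrt ((x i) ^ 2) := (Real.sqrt_sq_eq_abs _).symm
    _ ≤ Real.sqrt (‖x‖ ^ 2) := Real.sqrt_le_sqrt this
    _ = ‖x‖ := by rw [Real.sqrt_sq (norm_nonneg _)]

lemma aux_pInf_apply (ℓ : Fin 2) (y : E2) :
    pInf y ℓ = (2 * π)⁻¹ * (((1:ℝ) + ‖y‖ ^ 2)⁻¹ * y ℓ) := by
  have hπ := Real.pi_ne_zero
  have hq := (aux_q_pos y).ne'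
  simp only [pInf, PiLp.smul_apply, smul_eq_mul]
  field_simp

/-- The explicit Fréchet derivative of `y ↦ pInf y ℓ` at `x`. -/
noncomputable def pInfDeriv (ℓ : Fin 2) (x : E2) : E2 →L[ℝ] ℝ :=
  (2 * π)⁻¹ • ((((1:ℝ) + ‖x‖ ^ 2)⁻¹) • (EuclideanSpace.proj ℓ) +
    (x ℓ) • ((-(((1:ℝ) + ‖x‖ ^ 2) ^ 2)⁻¹) • ((2:ℕ) • (innerSL ℝ x))))

lemma aux_hasFDerivAt (ℓ : Fin 2) (x : E2) :
    HasFDerivAt (fun y : E2 => pInf y ℓ) (pInfDeriv ℓ x) x := by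
  have hq : ((1:ℝ) + ‖x‖ ^ 2) ≠ 0 := (aux_q_pos x).ne'
  have h1 : HasFDerivAt (fun y : E2 => (1:ℝ) + ‖y‖ ^ 2) ((2:ℕ) • (innerSL ℝ x)) x :=
    ((hasStrictFDerivAt_norm_sq x).hasFDerivAt).const_add 1
  have h2 : HasFDerivAt (fun y : E2 => ((1:ℝ) + ‖y‖ ^ 2)⁻¹)
      ((-(((1:ℝ) + ‖x‖ ^ 2) ^ 2)⁻¹) • ((2:ℕ) • (innerSL ℝ x))) x :=
    (hasDerivAt_inv hq).comp_hasFDerivAt x h1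
  have h3 : HasFDerivAt (𝕜 := ℝ) (fun y : E2 => y ℓ) (EuclideanSpace.proj ℓ) x :=
    ContinuousLinearMap.hasFDerivAt (𝕜 := ℝ) (E := E2) (F := ℝ) (f := EuclideanSpace.proj ℓ)
  have h4 := (h2.mul h3).const_mul ((2 * π)⁻¹)
  have : (fun y : E2 => (2 * π)⁻¹ * (((1:ℝ) + ‖y‖ ^ 2)⁻¹ * y ℓ)) =
      (fun y : E2 => pInf y ℓ) := by
    funext y; rw [aux_pInf_apply]
  simp only [Pi.mul_apply] at h4
  rw [this] at h4
  exact h4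

lemma aux_deriv_norm_le (ℓ : Fin 2) (x : E2) :
    ‖pInfDeriv ℓ x‖ ≤ ((1:ℝ) + ‖x‖ ^ 2)⁻¹ := by
  set q : ℝ := 1 + ‖x‖ ^ 2 with hq_def
  have hq : (0:ℝ) < q := aux_q_pos x
  have hπ : (3:ℝ) ≤ 2 * π := by
    nlinarith [Real.pi_gt_three]
  apply ContinuousLinearMap.opNorm_le_bound _ (by positivity)
  intro v
  have hev : pInfDeriv ℓ x v =
      (2 * π)⁻¹ * (q⁻¹ * v ℓ + x ℓ * (-(q ^ 2)⁻¹ * (2 * (inner ℝ x v : ℝ)))) := by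
    simp only [pInfDeriv, ContinuousLinearMap.smul_apply, ContinuousLinearMap.add_apply,
      PiLp.proj_apply, innerSL_apply_apply, smul_eq_mul, nsmul_eq_mul, Nat.cast_ofNat]
    rfl
  rw [hev, Real.norm_eq_abs]
  have h2π : (0:ℝ) < 2 * π := by positivity
  have e1 : |q⁻¹ * v ℓ| ≤ q⁻¹ * ‖v‖ := by
    rw [abs_mul, abs_of_pos (by positivity : (0:ℝ) < q⁻¹)]
    exact mul_le_mul_of_nonneg_left (aux_coord_abs_le v ℓ) (by positivity)
  have e2 : |x ℓ * (-(q ^ 2)⁻¹ * (2 * (inner ℝ x v : ℝ)))| ≤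
      ‖x‖ * ((q ^ 2)⁻¹ * (2 * (‖x‖ * ‖v‖))) := by
    rw [abs_mul]
    refine mul_le_mul (aux_coord_abs_le x ℓ) ?_ (abs_nonneg _) (norm_nonneg _)
    rw [abs_mul, abs_neg, abs_of_pos (by positivity : (0:ℝ) < (q ^ 2)⁻¹), abs_mul]
    refine mul_le_mul_of_nonneg_left ?_ (by positivity)
    rw [abs_of_nonneg (by norm_num : (0:ℝ) ≤ (2:ℝ))]
    exact mul_le_mul_of_nonneg_left (abs_real_inner_le_norm x v) (by norm_num)
  have hb : |q⁻¹ * v ℓ + x ℓ * (-(q ^ 2)⁻¹ * (2 * (inner ℝ x v : ℝ)))| ≤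
      q⁻¹ * ‖v‖ + ‖x‖ * ((q ^ 2)⁻¹ * (2 * (‖x‖ * ‖v‖))) :=
    (abs_add_le _ _).trans (add_le_add e1 e2)
  rw [abs_mul, abs_of_pos (by positivity : (0:ℝ) < (2*π)⁻¹)]
  have hx2 : ‖x‖ ^ 2 ≤ q := by simp only [hq_def]; linarith
  have hkey : q⁻¹ * ‖v‖ + ‖x‖ * ((q ^ 2)⁻¹ * (2 * (‖x‖ * ‖v‖))) ≤ 3 * q⁻¹ * ‖v‖ := by
    have h1 : ‖x‖ * ((q ^ 2)⁻¹ * (2 * (‖x‖ * ‖v‖))) = 2 * (‖x‖ ^ 2 / q ^ 2) * ‖v‖ := by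
      ring
    have h2 : ‖x‖ ^ 2 / q ^ 2 ≤ q⁻¹ := by
      have ha : ‖x‖ ^ 2 / q ^ 2 ≤ q / q ^ 2 := by gcongr
      have hbq : q / q ^ 2 = q⁻¹ := by
        field_simp [sq]
      linarith [ha.trans_eq hbq]
    rw [h1]
    nlinarith [norm_nonneg v, inv_pos.mpr hq]
  calc (2 * π)⁻¹ * |q⁻¹ * v ℓ + x ℓ * (-(q ^ 2)⁻¹ * (2 * (inner ℝ x v : ℝ)))|
      ≤ (2 * π)⁻¹ * (3 * q⁻¹ * ‖v‖) :=
        mul_le_mul_of_nonneg_left (hb.trans hkey) (by positivity)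
    _ = ((2 * π)⁻¹ * 3) * (q⁻¹ * ‖v‖) := by ring
    _ ≤ 1 * (q⁻¹ * ‖v‖) := by
        refine mul_le_mul_of_nonneg_right ?_ (by positivity)
        rw [inv_mul_le_iff₀ h2π]; linarith
    _ = q⁻¹ * ‖v‖ := one_mul _

lemma aux_g_mem : MemLp (fun x : E2 => ((1:ℝ) + ‖x‖ ^ 2)⁻¹) 2 volume := by
  have hcont : Continuous fun x : E2 => ((1:ℝ) + ‖x‖ ^ 2)⁻¹ := by
    refine Continuous.inv₀ (by continuity) fun x => (aux_q_pos x).ne'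
  refine (memLp_two_iff_integrable_sq hcont.aestronglyMeasurable).2 ?_
  have h4 : Integrable (fun x : E2 => ((1:ℝ) + ‖x‖ ^ 2) ^ ((-4:ℝ) / 2)) volume := by
    apply integrable_rpow_neg_one_add_norm_sq
    rw [finrank_euclideanSpace_fin]; norm_num
  refine h4.congr (Filter.Eventually.of_forall fun x => ?_)
  have hq := aux_q_pos x
  show ((1:ℝ) + ‖x‖ ^ 2) ^ ((-4:ℝ) / 2) = (((1:ℝ) + ‖x‖ ^ 2)⁻¹) ^ 2
  rw [show ((-4:ℝ)/2) = -(2:ℝ) by norm_num, Real.rpow_neg hq.le, Real.rpow_two, inv_pow]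

end aux

theorem stmt14 :
    ∀ ℓ : Fin 2,
      MemLp (fun x : EuclideanSpace ℝ (Fin 2) => wght x * pInf x ℓ) 2 volume
      ∧ MemLp (fun x : EuclideanSpace ℝ (Fin 2) =>
          gradient (fun y => pInf y ℓ) x) 2 volume := by
  intro ℓ
  have hg := aux_g_mem
  constructor
  · -- weighted part
    refine hg.of_le ?_ (Filter.Eventually.of_forall fun x => ?_)
    · -- measurability
      have hc1 : Continuous fun x : EuclideanSpace ℝ (Fin 2) => wght x := by
        unfold wght
        refine Continuous.div continuous_const ?_ fun x => ?_
        · refine Continuous.mul ?_ ?_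
          · refine continuous_const.add (continuous_const.mul ?_)
            refine Continuous.log (by continuity) fun x => (aux_q_pos x).ne'
          · exact Real.continuous_sqrt.comp (by continuity)
        · have h1 : (0:ℝ) ≤ (1/2:ℝ) * Real.log (1 + ‖x‖ ^ 2) := by
            have : (0:ℝ) ≤ Real.log (1 + ‖x‖ ^ 2) :=
              Real.log_nonneg (by nlinarith [sq_nonneg ‖x‖])
            linarith
          have h2 : (0:ℝ) < Real.sqrt (1 + ‖x‖ ^ 2) := Real.sqrt_pos.2 (aux_q_pos x)
          positivity
      have hc2 : Continuous fun x : EuclideanSpace ℝ (Fin 2) => pInf x ℓ := by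
        simp only [aux_pInf_apply]
        refine continuous_const.mul (Continuous.mul ?_ ?_)
        · exact Continuous.inv₀ (by continuity) fun x => (aux_q_pos x).ne'
        · exact (EuclideanSpace.proj ℓ : EuclideanSpace ℝ (Fin 2) →L[ℝ] ℝ).continuous
      exact (hc1.mul hc2).aestronglyMeasurable
    · -- pointwise bound
      set s : ℝ := 1 + ‖x‖ ^ 2 with hs_def
      have hs : (0:ℝ) < s := aux_q_pos x
      have hsq : (0:ℝ) < Real.sqrt s := Real.sqrt_pos.2 hs
      have hlog : (0:ℝ) ≤ Real.log s := Real.log_nonneg (by nlinarith [sq_nonneg ‖x‖])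
      have hw0 : 0 ≤ wght x := by
        unfold wght
        positivity
      have hw : wght x ≤ (Real.sqrt s)⁻¹ := by
        unfold wght
        rw [one_div]
        refine inv_anti₀ hsq ?_
        nlinarith [hsq, hlog]
      have hp : |pInf x ℓ| ≤ (2 * π)⁻¹ * s⁻¹ * Real.sqrt s := by
        rw [aux_pInf_apply, abs_mul, abs_mul]
        have hx : |x ℓ| ≤ Real.sqrt s := by
          refine (aux_coord_abs_le x ℓ).trans ?_
          rw [← Real.sqrt_sq (norm_nonneg x)]
          exact Real.sqrt_le_sqrt (by nlinarith)
        rw [abs_of_pos (by positivity : (0:ℝ) < (2*π)⁻¹),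
          abs_of_pos (by positivity : (0:ℝ) < s⁻¹), mul_assoc]
        exact mul_le_mul_of_nonneg_left
          (mul_le_mul_of_nonneg_left hx (by positivity)) (by positivity)
      have hbound : |wght x * pInf x ℓ| ≤ s⁻¹ := by
        rw [abs_mul, abs_of_nonneg hw0]
        have hsqne : Real.sqrt s ≠ 0 := hsq.ne'
        calc wght x * |pInf x ℓ|
            ≤ (Real.sqrt s)⁻¹ * ((2 * π)⁻¹ * s⁻¹ * Real.sqrt s) :=
              mul_le_mul hw hp (abs_nonneg _) (by positivity)
          _ = (2 * π)⁻¹ * s⁻¹ := by field_simp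
          _ ≤ 1 * s⁻¹ := by
              refine mul_le_mul_of_nonneg_right ?_ (by positivity)
              refine inv_le_one_of_one_le₀ ?_
              nlinarith [Real.pi_gt_three]
          _ = s⁻¹ := one_mul _
      show ‖wght x * pInf x ℓ‖ ≤ ‖((1:ℝ) + ‖x‖ ^ 2)⁻¹‖
      rw [Real.norm_eq_abs, Real.norm_eq_abs, abs_of_pos (inv_pos.2 hs)]
      exact hbound
  · -- gradient part
    have hdiff : ∀ x, gradient (fun y => pInf y ℓ) x =
        (InnerProductSpace.toDual ℝ _).symm (pInfDeriv ℓ x) := by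
      intro x
      rw [gradient, (aux_hasFDerivAt ℓ x).fderiv]
    refine hg.of_le ?_ (Filter.Eventually.of_forall fun x => ?_)
    · -- measurability via continuity of the gradient
      have hcd : ContDiff ℝ 1 (fun y : EuclideanSpace ℝ (Fin 2) => pInf y ℓ) := by
        simp only [aux_pInf_apply]
        refine contDiff_const.mul (ContDiff.mul ?_ ?_)
        · exact (contDiff_const.add (contDiff_norm_sq ℝ)).inv fun x => (aux_q_pos x).ne'
        · exact (EuclideanSpace.proj ℓ : EuclideanSpace ℝ (Fin 2) →L[ℝ] ℝ).contDiff
      have hfc : Continuous (fderiv ℝ (fun y : EuclideanSpace ℝ (Fin 2) => pInf y ℓ)) :=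
        hcd.continuous_fderiv one_ne_zero
      have : Continuous (gradient (fun y : EuclideanSpace ℝ (Fin 2) => pInf y ℓ)) := by
        simp only [gradient]
        exact (InnerProductSpace.toDual ℝ _).symm.continuous.comp hfc
      exact this.aestronglyMeasurable
    · rw [hdiff x, LinearIsometryEquiv.norm_map]
      refine (aux_deriv_norm_le ℓ x).trans ?_
      rw [Real.norm_eq_abs, abs_of_pos (inv_pos.2 (aux_q_pos x))]
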